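/- arXiv:2308.01805 — 3 statements merged into one kernel-verified Lean document; each statement's English description precedes it below -/
import Mathlib

section
/- Let c : ℤ → ℤ be finitely supported and let b ∈ ℤ satisfy c(w) = 0 for all w > b. Then for every s ∈ ℂ with Re(s) > 1 + b, the product over all prime numbers p of the finite products ∏_{w ∈ supp(c)} (1 − p^{w−s})^{−c(w)} converges (is multipliable) and equals ∏_{w ∈ supp(c)} ζ(s − w)^{c(w)}. (This is the factorization of the KU-theoretic Euler product of a finite CW-complex with torsion-free K-theory as a product of shifts of the Riemann zeta-function.) -/
private lemma hasProd_inv₀ {ι : Type*} {f : ι → ℂ} {a : ℂ} (h : HasProd f a) (ha : a ≠ 0) :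
    HasProd (fun i => (f i)⁻¹) a⁻¹ := by
  unfold HasProd at h ⊢
  have : Filter.Tendsto (fun s : Finset ι => (∏ i ∈ s, f i)⁻¹) Filter.atTop (nhds a⁻¹) :=
    h.inv₀ ha
  simpa [Finset.prod_inv_distrib] using this

private lemma hasProd_pow {ι : Type*} {f : ι → ℂ} {a : ℂ} (h : HasProd f a) (n : ℕ) :
    HasProd (fun i => f i ^ n) (a ^ n) := by
  induction n with
  | zero => simpa using hasProd_one
  | succ m ih => simpa [pow_succ] using ih.mul h

private lemma hasProd_zpow {ι : Type*} {f : ι → ℂ} {a : ℂ} (h : HasProd f a) (ha : a ≠ 0)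
    (n : ℤ) : HasProd (fun i => f i ^ n) (a ^ n) := by
  cases n with
  | ofNat m => simpa using hasProd_pow h m
  | negSucc m =>
      simpa [zpow_negSucc] using hasProd_inv₀ (hasProd_pow h (m + 1)) (pow_ne_zero _ ha)

/-- Factorization of the KU-theoretic Euler product of a finite CW-complex with
torsion-free K-theory (Betti data `c`) as a product of shifts of the Riemann
zeta-function, valid in the half-plane `Re s > 1 + b`. -/
theorem ku_euler_product_eq_zeta_shifts (c : ℤ →₀ ℤ) (b : ℤ)
    (hb : ∀ w : ℤ, b < w → c w = 0) (s : ℂ) (hs : 1 + (b : ℝ) < s.re) :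
    Multipliable (fun p : Nat.Primes =>
      ∏ w ∈ c.support, (1 - ((p : ℕ) : ℂ) ^ ((w : ℂ) - s)) ^ (-(c w))) ∧
    (∏' p : Nat.Primes,
        ∏ w ∈ c.support, (1 - ((p : ℕ) : ℂ) ^ ((w : ℂ) - s)) ^ (-(c w))) =
      ∏ w ∈ c.support, riemannZeta (s - (w : ℂ)) ^ (c w) := by
  have key : ∀ w ∈ c.support,
      HasProd (fun p : Nat.Primes => (1 - ((p : ℕ) : ℂ) ^ ((w : ℂ) - s)) ^ (-(c w)))
        (riemannZeta (s - (w : ℂ)) ^ (c w)) := by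
    intro w hw
    have hwb : w ≤ b := by
      by_contra h
      exact (Finsupp.mem_support_iff.mp hw) (hb w (by omega))
    have hre : 1 < (s - (w : ℂ)).re := by
      have : ((w : ℂ)).re = (w : ℝ) := by simp
      simp only [Complex.sub_re, this]
      have : (w : ℝ) ≤ (b : ℝ) := by exact_mod_cast hwb
      linarith
    have h := riemannZeta_eulerProduct_hasProd hre
    have hz : riemannZeta (s - (w : ℂ)) ≠ 0 := riemannZeta_ne_zero_of_one_lt_re hre
    have h2 := hasProd_zpow h (by exact hz) (c w)
    have hrw : ∀ p : Nat.Primes,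
        ((1 - ((p : ℕ) : ℂ) ^ (-(s - (w : ℂ))))⁻¹) ^ (c w)
          = (1 - ((p : ℕ) : ℂ) ^ ((w : ℂ) - s)) ^ (-(c w)) := by
      intro p
      rw [neg_sub, inv_zpow, ← zpow_neg]
    simpa [hrw] using h2
  have hprod := hasProd_prod key
  exact ⟨hprod.multipliable, hprod.tprod_eq⟩
end

section
/- Let c : ℤ → ℤ be finitely supported and let ζ̇_c(s) = ∏_{w ∈ supp(c)} ζ(s − w)^{c(w)}. Then for every integer m, ζ̇_c is meromorphic at m and its meromorphic order at s = m (positive values meaning a zero of that order, negative values a pole) equals −c(m−1) + Σ_{k ≥ 1} c(m + 2k), where the sum is finite because c is finitely supported. -/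
open Complex Filter Topology Real

private lemma zeta_fun_eq {s : ℂ} (hs : s.re < 0) :
    riemannZeta s =
      Complex.sin (((π:ℂ)/2) * s) *
        (2 * (2*(π:ℂ)) ^ (s-1) * Complex.Gamma (1-s) * riemannZeta (1-s)) := by
  have h1 : ∀ n : ℕ, (1 - s) ≠ -n := by
    intro n h
    have := congrArg Complex.re h
    simp [Complex.sub_re] at this
    linarith [this]
  have h2 : (1 - s) ≠ 1 := by
    intro h
    have hs0 : s = 0 := by
      have := congrArg (fun z => (1:ℂ) - z) h.symm
      simpa using this.symm
    simp [hs0] at hs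
  have key := riemannZeta_one_sub h1 h2
  rw [sub_sub_cancel] at key
  rw [key]
  have harg : (π:ℂ) * (1-s) / 2 = (π:ℂ)/2 - ((π:ℂ)/2) * s := by ring
  rw [harg, Complex.cos_pi_div_two_sub, neg_sub]
  ring

private lemma aux_G_ne_zero {s : ℂ} (hs : s.re < 0) :
    2 * (2*(π:ℂ)) ^ (s-1) * Complex.Gamma (1-s) * riemannZeta (1-s) ≠ 0 := by
  have h2pi : (2*(π:ℂ)) ≠ 0 := by
    simp [Complex.ofReal_ne_zero, Real.pi_ne_zero]
  refine mul_ne_zero (mul_ne_zero (mul_ne_zero two_ne_zero ?_) ?_) ?_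
  · rw [Complex.cpow_def_of_ne_zero h2pi]; exact Complex.exp_ne_zero _
  · refine Complex.Gamma_ne_zero fun m hm => ?_
    have := congrArg Complex.re hm
    simp [Complex.sub_re] at this
    linarith
  · refine riemannZeta_ne_zero_of_one_le_re ?_
    simp [Complex.sub_re]
    linarith

private lemma zeta_ne_zero_int {n : ℤ} (h1 : n ≠ 1) (h2 : ¬(n < 0 ∧ Even n)) :
    riemannZeta (n : ℂ) ≠ 0 := by
  rcases lt_or_ge n 0 with hneg | hpos
  · -- n negative, odd
    have hodd : Odd n := by
      rcases Int.even_or_odd n with he | ho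
      · exact absurd ⟨hneg, he⟩ h2
      · exact ho
    have hre : (n:ℂ).re < 0 := by simpa using (by exact_mod_cast hneg : (n:ℝ) < 0)
    rw [zeta_fun_eq hre]
    refine mul_ne_zero ?_ (aux_G_ne_zero hre)
    intro hsin
    rw [Complex.sin_eq_zero_iff] at hsin
    obtain ⟨k, hk⟩ := hsin
    have hpi : (π:ℂ) ≠ 0 := by simp [Complex.ofReal_ne_zero, Real.pi_ne_zero]
    have : (n:ℂ) = 2*k := by
      field_simp at hk
      have h' : (π:ℂ) * (n:ℂ) = (π:ℂ) * (2*k) := by linear_combination (π:ℂ) * hk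
      exact mul_left_cancel₀ hpi h'
    have hn2k : n = 2*k := by exact_mod_cast this
    rw [Int.odd_iff] at hodd
    omega
  · -- n ≥ 0
    rcases eq_or_lt_of_le hpos with h0 | hpos'
    · rw [← h0]; push_cast; rw [riemannZeta_zero]; norm_num
    · refine riemannZeta_ne_zero_of_one_le_re ?_
      simp only [Complex.intCast_re]
      exact_mod_cast hpos'

private lemma zeta_analyticAt' {x : ℂ} (hx : x ≠ 1) : AnalyticAt ℂ riemannZeta x :=
  DifferentiableOn.analyticAt (s := {(1:ℂ)}ᶜ)
    (fun z hz => (differentiableAt_riemannZeta hz).differentiableWithinAt)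
    (isOpen_compl_singleton.mem_nhds hx)

private lemma zeta_deriv_ne_zero_neg_even {n : ℤ} (hneg : n < 0) (heven : Even n) :
    deriv riemannZeta (n:ℂ) ≠ 0 := by
  have hre : (n:ℂ).re < 0 := by simpa using (by exact_mod_cast hneg : (n:ℝ) < 0)
  set G : ℂ → ℂ := fun s =>
    2 * (2*(π:ℂ)) ^ (s-1) * Complex.Gamma (1-s) * riemannZeta (1-s) with hGdef
  set F : ℂ → ℂ := fun s => Complex.sin (((π:ℂ)/2) * s) * G s with hFdef
  have hFG : riemannZeta =ᶠ[𝓝 (n:ℂ)] F := by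
    have hopen : IsOpen {z : ℂ | z.re < 0} := isOpen_lt Complex.continuous_re continuous_const
    filter_upwards [hopen.mem_nhds hre] with z hz
    exact zeta_fun_eq hz
  -- differentiability of G at n
  have hGdiff : DifferentiableAt ℂ G (n:ℂ) := by
    have hsub : DifferentiableAt ℂ (fun s : ℂ => 1 - s) (n:ℂ) :=
      (differentiableAt_const 1).sub differentiableAt_id
    have hgam : DifferentiableAt ℂ (fun s : ℂ => Complex.Gamma (1-s)) (n:ℂ) := by
      refine DifferentiableAt.comp _ (Complex.differentiableAt_Gamma _ fun m hm => ?_) hsub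
      have := congrArg Complex.re hm
      simp [Complex.sub_re] at this
      have hm0 : (0:ℝ) ≤ (m:ℝ) := Nat.cast_nonneg m
      have hn0 : ((n:ℝ)) < 0 := by exact_mod_cast hneg
      linarith
    have hzeta : DifferentiableAt ℂ (fun s : ℂ => riemannZeta (1-s)) (n:ℂ) := by
      refine DifferentiableAt.comp _ (differentiableAt_riemannZeta ?_) hsub
      intro h
      have := congrArg Complex.re h
      simp [Complex.sub_re] at this
      have hn0 : ((n:ℝ)) < 0 := by exact_mod_cast hneg
      linarith
    have hcpow : DifferentiableAt ℂ (fun s : ℂ => (2*(π:ℂ)) ^ (s-1)) (n:ℂ) := by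
      refine DifferentiableAt.const_cpow (differentiableAt_id.sub (differentiableAt_const 1)) ?_
      exact Or.inl (by simp [Complex.ofReal_ne_zero, Real.pi_ne_zero])
    exact (((differentiableAt_const 2).mul hcpow).mul hgam).mul hzeta
  have hsinD : HasDerivAt (fun s : ℂ => Complex.sin (((π:ℂ)/2) * s))
      (Complex.cos (((π:ℂ)/2) * (n:ℂ)) * ((π:ℂ)/2)) (n:ℂ) := by
    have hinner : HasDerivAt (fun s : ℂ => ((π:ℂ)/2) * s) ((π:ℂ)/2) (n:ℂ) := by
      simpa using (hasDerivAt_id ((n:ℂ))).const_mul ((π:ℂ)/2)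
    exact (Complex.hasDerivAt_sin (((π:ℂ)/2) * (n:ℂ))).comp _ hinner
  have hFD : HasDerivAt F
      (Complex.cos (((π:ℂ)/2) * (n:ℂ)) * ((π:ℂ)/2) * G (n:ℂ) +
        Complex.sin (((π:ℂ)/2) * (n:ℂ)) * deriv G (n:ℂ)) (n:ℂ) :=
    hsinD.mul hGdiff.hasDerivAt
  have hsin0 : Complex.sin (((π:ℂ)/2) * (n:ℂ)) = 0 := by
    obtain ⟨t, ht⟩ := heven
    rw [Complex.sin_eq_zero_iff]
    exact ⟨t, by rw [ht]; push_cast; ring⟩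
  have hcos0 : Complex.cos (((π:ℂ)/2) * (n:ℂ)) ≠ 0 := by
    intro h
    rw [Complex.cos_eq_zero_iff] at h
    obtain ⟨k, hk⟩ := h
    have hpi : (π:ℂ) ≠ 0 := by simp [Complex.ofReal_ne_zero, Real.pi_ne_zero]
    have : (n:ℂ) = 2*k+1 := by
      field_simp at hk
      have h' : (π:ℂ) * (n:ℂ) = (π:ℂ) * (2*k+1) := by linear_combination (π:ℂ) * hk
      exact mul_left_cancel₀ hpi h'
    have hn : n = 2*k+1 := by exact_mod_cast this
    rw [Int.even_iff] at heven
    omega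
  have hdF : deriv riemannZeta (n:ℂ) = deriv F (n:ℂ) := hFG.deriv_eq
  rw [hdF, hFD.deriv, hsin0, zero_mul, add_zero]
  exact mul_ne_zero (mul_ne_zero hcos0 (by simp [Complex.ofReal_ne_zero, Real.pi_ne_zero]))
    (aux_G_ne_zero hre)

private lemma zeta_zero_neg_even {n : ℤ} (hneg : n < 0) (heven : Even n) :
    riemannZeta (n:ℂ) = 0 := by
  obtain ⟨t, ht⟩ := heven
  have ht2 : n = 2 * t := by omega
  have htneg : t < 0 := by omega
  set k : ℕ := (-t-1).toNat with hk
  have hkt : (k:ℤ) = -t-1 := Int.toNat_of_nonneg (by omega)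
  have hcast : (n:ℂ) = -2 * ((k:ℂ) + 1) := by
    have : (n:ℤ) = -2 * ((k:ℤ) + 1) := by omega
    exact_mod_cast this
  rw [hcast]
  exact riemannZeta_neg_two_mul_nat_add_one k


private lemma zeta_analyticAt {x : ℂ} (hx : x ≠ 1) : AnalyticAt ℂ riemannZeta x :=
  DifferentiableOn.analyticAt (s := {(1:ℂ)}ᶜ)
    (fun z hz => (differentiableAt_riemannZeta hz).differentiableWithinAt)
    (isOpen_compl_singleton.mem_nhds hx)

-- order of zeta at 1 is -1
private lemma zeta_order_at_one :
    ∃ h : MeromorphicAt riemannZeta 1, meromorphicOrderAt riemannZeta 1 = (-1 : ℤ) := by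
  set g : ℂ → ℂ := Function.update (fun s => (s - 1) * riemannZeta s) 1 1 with hgdef
  have hgev : ∀ᶠ z in 𝓝[≠] (1:ℂ), g z = (z - 1) * riemannZeta z := by
    filter_upwards [self_mem_nhdsWithin] with z hz
    exact Function.update_of_ne hz _ _
  have hga : AnalyticAt ℂ g 1 := by
    apply Complex.analyticAt_of_differentiable_on_punctured_nhds_of_continuousAt
    · filter_upwards [hgev, self_mem_nhdsWithin] with z hz hz1
      apply DifferentiableAt.congr_of_eventuallyEq
        (((differentiableAt_id.sub (differentiableAt_const 1)).mul
          (differentiableAt_riemannZeta hz1)))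
      filter_upwards [eventually_ne_nhds hz1] with w hw
      exact Function.update_of_ne hw _ _
    · rw [hgdef]
      rw [continuousAt_update_same]
      exact riemannZeta_residue_one
  have hg1 : g 1 ≠ 0 := by simp [hgdef]
  have hev : ∀ᶠ z in 𝓝[≠] (1:ℂ), riemannZeta z = (z - 1) ^ (-1 : ℤ) • g z := by
    filter_upwards [hgev, self_mem_nhdsWithin] with z hz hz1
    have hz1' : z - 1 ≠ 0 := sub_ne_zero.mpr hz1
    rw [hz, zpow_neg_one, smul_eq_mul]; field_simp
  have hm : MeromorphicAt riemannZeta 1 :=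
    MeromorphicAt.iff_eventuallyEq_zpow_smul_analyticAt.mpr ⟨-1, g, hga, hev⟩
  exact ⟨hm, (meromorphicOrderAt_eq_int_iff (n := -1) hm).mpr ⟨g, hga, hg1, hev⟩⟩


/-- the order of `ζ` at an integer `n`. -/
private def zord (n : ℤ) : ℤ := if n = 1 then -1 else if n < 0 ∧ Even n then 1 else 0

private lemma zeta_order_int (n : ℤ) :
    ∃ h : MeromorphicAt riemannZeta (n:ℂ), meromorphicOrderAt riemannZeta (n:ℂ) = (zord n : WithTop ℤ) := by
  rcases eq_or_ne n 1 with rfl | hn1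
  · obtain ⟨h, hord⟩ := zeta_order_at_one
    rw [show ((1:ℤ):ℂ) = 1 by norm_num]
    exact ⟨h, by rw [hord, zord]; norm_num⟩
  · have hx : (n:ℂ) ≠ 1 := by
      intro h; exact hn1 (by exact_mod_cast h)
    have hA : AnalyticAt ℂ riemannZeta (n:ℂ) := zeta_analyticAt' hx
    by_cases hne : n < 0 ∧ Even n
    · -- simple zero
      have horder : analyticOrderAt riemannZeta (n:ℂ) = (1 : ℕ) := by
        rw [hA.analyticOrderAt_eq_natCast]
        obtain ⟨p, hp⟩ := hA
        refine ⟨dslope riemannZeta (n:ℂ), (hp.has_fpower_series_dslope_fslope).analyticAt, ?_, ?_⟩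
        · rw [dslope_same]
          exact zeta_deriv_ne_zero_neg_even hne.1 hne.2
        · filter_upwards with z
          rw [pow_one]
          rw [sub_smul_dslope, zeta_zero_neg_even hne.1 hne.2, sub_zero]
      refine ⟨hA.meromorphicAt, ?_⟩
      rw [hA.meromorphicOrderAt_eq, horder]
      rw [zord, if_neg hn1, if_pos hne]
      rfl
    · -- nonvanishing
      have horder : analyticOrderAt riemannZeta (n:ℂ) = (0 : ℕ) := by
        rw [hA.analyticOrderAt_eq_natCast]
        exact ⟨riemannZeta, hA, zeta_ne_zero_int hn1 hne, by filter_upwards with z; simp⟩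
      refine ⟨hA.meromorphicAt, ?_⟩
      rw [hA.meromorphicOrderAt_eq, horder]
      rw [zord, if_neg hn1, if_neg hne]
      rfl

private lemma analyticAt_zpow' {g : ℂ → ℂ} {x : ℂ} (hg : AnalyticAt ℂ g x) (hgx : g x ≠ 0)
    (n : ℤ) : AnalyticAt ℂ (fun z => g z ^ n) x := by
  cases n with
  | ofNat k => simpa using hg.fun_pow k
  | negSucc k => simpa [zpow_negSucc] using (hg.fun_pow (k+1)).fun_inv (pow_ne_zero _ hgx)

private lemma merom_shift {f : ℂ → ℂ} (a x : ℂ) {y : ℂ} {n : ℤ}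
    (h : MeromorphicAt f y) (hy : y = x - a) (hn : meromorphicOrderAt f y = (n : WithTop ℤ)) :
    ∃ h' : MeromorphicAt (fun s => f (s - a)) x, meromorphicOrderAt (fun s => f (s - a)) x = (n : WithTop ℤ) := by
  subst hy
  obtain ⟨g, hg, hgne, hev⟩ := (meromorphicOrderAt_eq_int_iff (n := n) h).mp hn
  have htend : Filter.Tendsto (fun s : ℂ => s - a) (𝓝[≠] x) (𝓝[≠] (x - a)) := by
    apply tendsto_nhdsWithin_of_tendsto_nhds_of_eventually_within
    · exact ((continuous_sub_right a).tendsto x).mono_left nhdsWithin_le_nhds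
    · filter_upwards [self_mem_nhdsWithin] with z hz
      simp only [Set.mem_compl_iff, Set.mem_singleton_iff, sub_left_inj]
      exact hz
  have hga : AnalyticAt ℂ (fun s => g (s - a)) x := by
    have : AnalyticAt ℂ (fun s : ℂ => s - a) x := analyticAt_id.sub analyticAt_const
    exact AnalyticAt.comp (by simpa using hg) this
  have hev' : ∀ᶠ s in 𝓝[≠] x, f (s - a) = (s - x) ^ n • g (s - a) := by
    filter_upwards [htend.eventually hev] with s hs
    rw [hs, sub_sub_sub_cancel_right]
  have hm : MeromorphicAt (fun s => f (s - a)) x :=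
    MeromorphicAt.iff_eventuallyEq_zpow_smul_analyticAt.mpr ⟨n, _, hga, hev'⟩
  exact ⟨hm, (meromorphicOrderAt_eq_int_iff (n := n) hm).mpr ⟨_, hga, hgne, hev'⟩⟩

private lemma merom_zpow_order {f : ℂ → ℂ} {x : ℂ} {a : ℤ} (h : MeromorphicAt f x)
    (ha : meromorphicOrderAt f x = (a : WithTop ℤ)) (n : ℤ) :
    ∃ h' : MeromorphicAt (fun z => f z ^ n) x, meromorphicOrderAt (fun z => f z ^ n) x = ((n * a : ℤ) : WithTop ℤ) := by
  obtain ⟨g, hg, hgne, hev⟩ := (meromorphicOrderAt_eq_int_iff (n := a) h).mp ha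
  have hm : MeromorphicAt (fun z => f z ^ n) x := h.zpow n
  refine ⟨hm, (meromorphicOrderAt_eq_int_iff hm).mpr
    ⟨fun z => g z ^ n, analyticAt_zpow' hg hgne n, zpow_ne_zero n hgne, ?_⟩⟩
  filter_upwards [hev, self_mem_nhdsWithin] with z hz hzx
  have hzx' : z - x ≠ 0 := sub_ne_zero.mpr hzx
  rw [hz, smul_eq_mul, smul_eq_mul, mul_zpow, ← zpow_mul, mul_comm a n]

private lemma merom_mul_order {f g : ℂ → ℂ} {x : ℂ} {a b : ℤ} (hf : MeromorphicAt f x)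
    (hg : MeromorphicAt g x) (ha : meromorphicOrderAt f x = (a : WithTop ℤ)) (hb : meromorphicOrderAt g x = (b : WithTop ℤ)) :
    ∃ h : MeromorphicAt (fun z => f z * g z) x, meromorphicOrderAt (fun z => f z * g z) x = ((a + b : ℤ) : WithTop ℤ) := by
  obtain ⟨g₁, hg₁, hg₁ne, hev₁⟩ := (meromorphicOrderAt_eq_int_iff (n := a) hf).mp ha
  obtain ⟨g₂, hg₂, hg₂ne, hev₂⟩ := (meromorphicOrderAt_eq_int_iff (n := b) hg).mp hb
  have hm : MeromorphicAt (fun z => f z * g z) x := hf.mul hg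
  refine ⟨hm, (meromorphicOrderAt_eq_int_iff hm).mpr
    ⟨fun z => g₁ z * g₂ z, hg₁.mul hg₂, mul_ne_zero hg₁ne hg₂ne, ?_⟩⟩
  filter_upwards [hev₁, hev₂, self_mem_nhdsWithin] with z hz₁ hz₂ hzx
  have hzx' : z - x ≠ 0 := sub_ne_zero.mpr hzx
  rw [hz₁, hz₂, smul_eq_mul, smul_eq_mul, smul_eq_mul, zpow_add₀ hzx']
  ring

private lemma merom_one_order {x : ℂ} :
    ∃ h : MeromorphicAt (fun _ : ℂ => (1:ℂ)) x, meromorphicOrderAt (fun _ : ℂ => (1:ℂ)) x = ((0:ℤ) : WithTop ℤ) := by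
  have hm : MeromorphicAt (fun _ : ℂ => (1:ℂ)) x := MeromorphicAt.const 1 x
  exact ⟨hm, (meromorphicOrderAt_eq_int_iff (n := 0) hm).mpr ⟨fun _ => 1, analyticAt_const, one_ne_zero,
    by filter_upwards with z; simp⟩⟩

private lemma prod_order (c : ℤ →₀ ℤ) (m : ℤ) (S : Finset ℤ) :
    ∃ h : MeromorphicAt (fun s : ℂ => ∏ w ∈ S, riemannZeta (s - (w:ℂ)) ^ (c w)) (m:ℂ),
      meromorphicOrderAt (fun s : ℂ => ∏ w ∈ S, riemannZeta (s - (w:ℂ)) ^ (c w)) (m:ℂ) = ((∑ w ∈ S, c w * zord (m - w) : ℤ) : WithTop ℤ) := by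
  induction S using Finset.cons_induction with
  | empty => simpa using merom_one_order
  | cons w S hw ih =>
    obtain ⟨h₀, ho₀⟩ := zeta_order_int (m - w)
    have hcast : ((m - w : ℤ) : ℂ) = (m:ℂ) - (w:ℂ) := by push_cast; ring
    obtain ⟨h₁, ho₁⟩ := merom_shift (w:ℂ) (m:ℂ) h₀ hcast ho₀
    obtain ⟨h₂, ho₂⟩ := merom_zpow_order h₁ ho₁ (c w)
    obtain ⟨h₃, ho₃⟩ := ih
    obtain ⟨h₄, ho₄⟩ := merom_mul_order h₂ h₃ ho₂ ho₃
    simp only [Finset.prod_cons, Finset.sum_cons]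
    exact ⟨h₄, ho₄⟩

private lemma sum_eq_target (c : ℤ →₀ ℤ) (m : ℤ) :
    ∑ w ∈ c.support, c w * zord (m - w)
      = -c (m - 1) + ∑ᶠ k : ℕ, c (m + 2 * ((k : ℤ) + 1)) := by
  set N : ℕ := c.support.sup fun w => (w - m).toNat with hN
  set img : Finset ℤ := (Finset.range N).image (fun k : ℕ => m + 2*((k:ℤ)+1)) with himg
  have hmem_img : ∀ w : ℤ, w ∈ img ↔ ∃ k : ℕ, k < N ∧ w = m + 2*((k:ℤ)+1) := by
    intro w
    simp only [himg, Finset.mem_image, Finset.mem_range]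
    constructor
    · rintro ⟨k, hk, rfl⟩; exact ⟨k, hk, rfl⟩
    · rintro ⟨k, hk, rfl⟩; exact ⟨k, hk, rfl⟩
  have hsupN : ∀ w ∈ c.support, (w - m).toNat ≤ N :=
    fun w hw => Finset.le_sup (f := fun w => (w - m).toNat) hw
  have hchar : ∀ w ∈ c.support,
      c w * zord (m - w)
        = (if w = m - 1 then -c w else 0) + (if w ∈ img then c w else 0) := by
    intro w hw
    have hle := hsupN w hw
    rw [zord]
    by_cases h1 : m - w = 1
    · have hw1 : w = m - 1 := by omega
      have hnimg : w ∉ img := by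
        rw [hmem_img]; rintro ⟨k, hk, hkw⟩; omega
      rw [if_pos h1, if_pos hw1, if_neg hnimg]
      ring
    · rw [if_neg h1]
      have hw1 : ¬ (w = m - 1) := by omega
      by_cases h2 : m - w < 0 ∧ Even (m - w)
      · have himgw : w ∈ img := by
          rw [hmem_img]
          obtain ⟨t, ht⟩ := h2.2
          have h2' := h2.1
          refine ⟨(-t-1).toNat, by omega, by omega⟩
        rw [if_pos h2, if_pos himgw, if_neg hw1]
        ring
      · have hnimg : w ∉ img := by
          rw [hmem_img]
          rintro ⟨k, hk, hkw⟩
          apply h2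
          constructor
          · omega
          · rw [Int.even_iff]; omega
        rw [if_neg h2, if_neg hnimg, if_neg hw1]
        ring
  rw [Finset.sum_congr rfl hchar, Finset.sum_add_distrib]
  congr 1
  · rw [Finset.sum_ite_eq' c.support (m-1) (fun w => -c w)]
    by_cases hmem : m - 1 ∈ c.support
    · rw [if_pos hmem]
    · rw [if_neg hmem, Finsupp.notMem_support_iff.mp hmem, neg_zero]
  · rw [← Finset.sum_filter]
    rw [Finset.sum_subset (s₁ := c.support.filter (· ∈ img)) (s₂ := img)
      (fun w hw => (Finset.mem_filter.mp hw).2)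
      (fun w hwimg hwf => by
        by_contra hne
        exact hwf (Finset.mem_filter.mpr ⟨Finsupp.mem_support_iff.mpr hne, hwimg⟩))]
    rw [himg, Finset.sum_image (fun a _ b _ hab => by omega)]
    rw [finsum_eq_sum_of_support_subset]
    intro k hk
    simp only [Function.mem_support, Ne] at hk
    have hmem : (m + 2*((k:ℤ)+1)) ∈ c.support := Finsupp.mem_support_iff.mpr hk
    have := hsupN _ hmem
    simp only [Finset.coe_range, Set.mem_Iio]
    omega

/-- The meromorphic order of the provisional KU-local zeta-function
`s ↦ ∏ w, ζ(s - w) ^ c w` at an integer point `m` equals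
`-c (m - 1) + ∑_{k ≥ 1} c (m + 2k)` (positive order = zero, negative = pole). -/
theorem provisional_ku_zeta_order_at_int (c : ℤ →₀ ℤ) (m : ℤ) :
    ∃ h : MeromorphicAt
        (fun s : ℂ => ∏ w ∈ c.support, riemannZeta (s - (w : ℂ)) ^ (c w)) (m : ℂ),
      meromorphicOrderAt
          (fun s : ℂ => ∏ w ∈ c.support, riemannZeta (s - (w : ℂ)) ^ (c w)) (m : ℂ) =
        ((-c (m - 1) + ∑ᶠ k : ℕ, c (m + 2 * ((k : ℤ) + 1)) : ℤ) : WithTop ℤ) := by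
  obtain ⟨h, ho⟩ := prod_order c m c.support
  exact ⟨h, by rw [ho, sum_eq_target c m]⟩
end

section
/- Let ℓ be an odd prime, w an integer, and s ∈ ℂ with Re(s) > 1 + w. For each prime p ≠ ℓ choose a natural number m_p whose residue class in ℤ/ℓℤ equals that of p^w (computed in the unit group (ℤ/ℓℤ)^× when w < 0). Then the family indexed by the primes p ≠ ℓ whose p-th term is ∏_{χ ∈ S_ℓ} (1 − χ(p)^{m_p} · p^{w−s})^{−1} is multipliable, and its product equals ∏_{χ ∈ S_ℓ} L(s − w, χ). In particular the Euler product is independent of the choice of the exponents m_p. (This is the prime-order case of the identification of the torsion KU-local L-function, with Adams-operation twist p ↦ p^w, as a product of Dirichlet L-functions.) -/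
open Complex

set_option maxHeartbeats 1000000


/-- Prime-order case of the identification of the torsion KU-local L-function as a
product of Dirichlet L-functions.  For an odd prime `ℓ`, weight `w`, and
`Re s > 1 + w`: given, for each prime `p ≠ ℓ`, a natural number `m p` congruent to
`p ^ w` modulo `ℓ`, the Euler product over primes `p ≠ ℓ` of
`∏_{χ of order ℓ mod ℓ²} (1 - χ(p)^{m p} p^{w - s})⁻¹` is multipliable and equals
`∏_{χ of order ℓ mod ℓ²} L(s - w, χ)`. -/
theorem torsion_ku_L_euler_product (ℓ : ℕ) [Fact ℓ.Prime] (hodd : Odd ℓ)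
    (w : ℤ) (s : ℂ) (hs : 1 + (w : ℝ) < s.re) (m : Nat.Primes → ℕ)
    (hm : ∀ p : Nat.Primes, (p : ℕ) ≠ ℓ →
      ((m p : ZMod ℓ)) = (((p : ℕ) : ZMod ℓ)) ^ w) :
    Multipliable (fun p : {p : Nat.Primes // (p : ℕ) ≠ ℓ} =>
      ∏ᶠ χ ∈ {χ : DirichletCharacter ℂ (ℓ ^ 2) | orderOf χ = ℓ},
        (1 - χ (((p.1 : ℕ) : ZMod (ℓ ^ 2))) ^ (m p.1) *
            ((p.1 : ℕ) : ℂ) ^ ((w : ℂ) - s))⁻¹) ∧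
    (∏' p : {p : Nat.Primes // (p : ℕ) ≠ ℓ},
        ∏ᶠ χ ∈ {χ : DirichletCharacter ℂ (ℓ ^ 2) | orderOf χ = ℓ},
          (1 - χ (((p.1 : ℕ) : ZMod (ℓ ^ 2))) ^ (m p.1) *
              ((p.1 : ℕ) : ℂ) ^ ((w : ℂ) - s))⁻¹) =
      ∏ᶠ χ ∈ {χ : DirichletCharacter ℂ (ℓ ^ 2) | orderOf χ = ℓ},
        DirichletCharacter.LFunction χ (s - (w : ℂ)) := by
  classical
  have hℓ : ℓ.Prime := Fact.out
  have hs' : 1 < (s - (w : ℂ)).re := by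
    rw [Complex.sub_re, Complex.intCast_re]; linarith
  set S : Set (DirichletCharacter ℂ (ℓ ^ 2)) := {χ | orderOf χ = ℓ} with hSdef
  have hSfin : S.Finite := Set.toFinite _
  set F : Finset (DirichletCharacter ℂ (ℓ ^ 2)) := hSfin.toFinset with hFdef
  have hmemF : ∀ χ : DirichletCharacter ℂ (ℓ ^ 2), χ ∈ F ↔ orderOf χ = ℓ := by
    intro χ; simp [hFdef, hSdef]
  set g : DirichletCharacter ℂ (ℓ ^ 2) → Nat.Primes → ℂ :=
    fun χ p => (1 - χ (((p : ℕ) : ZMod (ℓ ^ 2))) * ((p : ℕ) : ℂ) ^ ((w : ℂ) - s))⁻¹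
    with hgdef
  -- Euler product for each character
  have hprod : ∀ χ : DirichletCharacter ℂ (ℓ ^ 2),
      HasProd (g χ) (DirichletCharacter.LFunction χ (s - (w : ℂ))) := by
    intro χ
    have h := DirichletCharacter.LSeries_eulerProduct_hasProd χ hs'
    rw [← DirichletCharacter.LFunction_eq_LSeries χ hs'] at h
    simpa only [hgdef, neg_sub] using h
  have hone : ∀ χ : DirichletCharacter ℂ (ℓ ^ 2),
      ∀ x ∉ Set.range (fun p : {p : Nat.Primes // (p : ℕ) ≠ ℓ} => p.1), g χ x = 1 := by
    intro χ x hx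
    have hp : (x : ℕ) = ℓ := by
      by_contra h
      exact hx ⟨⟨x, h⟩, rfl⟩
    have hnu : ¬ IsUnit (((x : ℕ) : ZMod (ℓ ^ 2))) := by
      rw [ZMod.isUnit_iff_coprime, hp, Nat.Coprime,
        Nat.gcd_eq_left (dvd_pow_self ℓ two_ne_zero)]
      exact hℓ.ne_one
    rw [hgdef]
    simp only [χ.map_nonunit hnu, zero_mul, sub_zero, inv_one]
  have hsub : ∀ χ : DirichletCharacter ℂ (ℓ ^ 2),
      HasProd (fun p : {p : Nat.Primes // (p : ℕ) ≠ ℓ} => g χ p.1)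
        (DirichletCharacter.LFunction χ (s - (w : ℂ))) := fun χ =>
    (Function.Injective.hasProd_iff
      (fun a b h => Subtype.ext h) (hone χ)).mpr (hprod χ)
  -- pointwise identity removing the twist
  have hpoint : ∀ p : {p : Nat.Primes // (p : ℕ) ≠ ℓ},
      (∏ᶠ χ ∈ S, (1 - χ (((p.1 : ℕ) : ZMod (ℓ ^ 2))) ^ (m p.1) *
          ((p.1 : ℕ) : ℂ) ^ ((w : ℂ) - s))⁻¹) = ∏ χ ∈ F, g χ p.1 := by
    rintro ⟨p, hp⟩
    rw [← hSfin.coe_toFinset, finprod_mem_coe_finset]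
    have hpu : (((p : ℕ) : ZMod ℓ)) ≠ 0 := by
      rw [Ne, ZMod.natCast_eq_zero_iff]
      intro hdvd
      exact hp ((Nat.prime_dvd_prime_iff_eq hℓ p.2).mp hdvd).symm
    have hm0 : ((m p : ZMod ℓ)) ≠ 0 := by
      rw [hm p hp]; exact zpow_ne_zero _ hpu
    have hmnat : m p ≠ 0 := by
      intro h; exact hm0 (by simp [h])
    set k : ℕ := ((m p : ZMod ℓ)⁻¹ : ZMod ℓ).val with hkdef
    have hk : ((m p * k : ℕ) : ZMod ℓ) = 1 := by
      push_cast [hkdef]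
      rw [ZMod.natCast_val, ZMod.cast_id]
      exact mul_inv_cancel₀ hm0
    have hk0 : ((k : ZMod ℓ)) ≠ 0 := by
      intro h
      rw [Nat.cast_mul, h, mul_zero] at hk
      exact one_ne_zero hk.symm
    have hknat : k ≠ 0 := by intro h; exact hk0 (by simp [h])
    have hmod : (m p * k) % ℓ = 1 := by
      have h1 : m p * k ≡ 1 [MOD ℓ] := by
        rw [← ZMod.natCast_eq_natCast_iff]; simpa using hk
      have h2 : (m p * k) % ℓ = 1 % ℓ := h1
      rwa [Nat.mod_eq_of_lt hℓ.one_lt] at h2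
    have hgcdm : Nat.gcd ℓ (m p) = 1 := by
      exact (Nat.Prime.coprime_iff_not_dvd hℓ).mpr
        (fun hdvd => hm0 ((ZMod.natCast_eq_zero_iff _ _).mpr hdvd))
    have hgcdk : Nat.gcd ℓ k = 1 :=
      (Nat.Prime.coprime_iff_not_dvd hℓ).mpr
        (fun hdvd => hk0 ((ZMod.natCast_eq_zero_iff _ _).mpr hdvd))
    refine Finset.prod_nbij' (fun χ => χ ^ (m p)) (fun χ => χ ^ k) ?_ ?_ ?_ ?_ ?_
    · intro χ hχ
      rw [hmemF] at hχ ⊢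
      rw [orderOf_pow' _ hmnat, hχ, hgcdm, Nat.div_one]
    · intro χ hχ
      rw [hmemF] at hχ ⊢
      rw [orderOf_pow' _ hknat, hχ, hgcdk, Nat.div_one]
    · intro χ hχ
      rw [hmemF] at hχ
      show (χ ^ m p) ^ k = χ
      rw [← pow_mul]
      calc χ ^ (m p * k) = χ ^ ((m p * k) % orderOf χ) := (pow_mod_orderOf χ _).symm
        _ = χ := by rw [hχ, hmod, pow_one]
    · intro χ hχ
      rw [hmemF] at hχ
      show (χ ^ k) ^ m p = χ
      rw [← pow_mul, mul_comm k (m p)]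
      calc χ ^ (m p * k) = χ ^ ((m p * k) % orderOf χ) := (pow_mod_orderOf χ _).symm
        _ = χ := by rw [hχ, hmod, pow_one]
    · intro χ hχ
      rw [hgdef]
      simp only [MulChar.pow_apply' χ hmnat]
  refine ⟨?_, ?_⟩
  · refine Multipliable.congr ((hasProd_prod
      (fun χ (_ : χ ∈ F) => hsub χ)).multipliable) ?_
    intro p
    exact (hpoint p).symm
  · rw [tprod_congr hpoint, Multipliable.tprod_finsetProd (fun χ _ => (hsub χ).multipliable),
      ← hSfin.coe_toFinset, finprod_mem_coe_finset]
    exact Finset.prod_congr rfl fun χ _ => (hsub χ).tprod_eq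
end
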